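/- arXiv:2405.16603 — 6 statements merged into one kernel-verified Lean document; each statement's English description precedes it below -/
import Mathlib

section
/- Let Δ ⊆ ℝ be the 'middle-two-thirds' Cantor set, i.e. Δ = { ∑_{n=1}^∞ a_n 6^{-n} : a_n ∈ {0,5} for all n }. If b, b' ∈ Δ and b ≠ b', then (b + b')/2 ∉ Δ. -/
/-- The "middle-two-thirds" Cantor set: real numbers of the form
`∑_{n=1}^∞ a_n 6^{-n}` with every digit `a_n ∈ {0, 5}`. -/
def CantorMiddleTwoThirds : Set ℝ :=
  {x | ∃ a : ℕ → ℝ, (∀ n, a n = 0 ∨ a n = 5) ∧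
    HasSum (fun n => a n / 6 ^ (n + 1)) x}

/-- Auxiliary: if digits `d n` are each `0` or of absolute value in `[5/2, 5]`,
and the series sums to `0`, then all digits vanish. -/
lemma cantor_digits_zero (d : ℕ → ℝ) (hd : ∀ n, d n = 0 ∨ 5 / 2 ≤ |d n|)
    (hub : ∀ n, |d n| ≤ 5)
    (hsum : HasSum (fun n => d n / 6 ^ (n + 1)) 0) : ∀ n, d n = 0 := by
  by_contra h
  push_neg at h
  have hex : ∃ n, d n ≠ 0 := h
  classical
  set N := Nat.find hex with hN
  have hdN : d N ≠ 0 := Nat.find_spec hex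
  have hlt : ∀ m < N, d m = 0 := fun m hm => by
    by_contra hm'
    exact absurd (Nat.find_le hm' : N ≤ m) (not_le.mpr hm)
  set f : ℕ → ℝ := fun n => d n / 6 ^ (n + 1) with hf
  -- sum over first N+1 terms is f N
  have hsum' : HasSum (fun n => f (n + (N + 1))) (0 - ∑ i ∈ Finset.range (N + 1), f i) :=
    (hasSum_nat_add_iff' (N + 1)).mpr hsum
  have hrange : ∑ i ∈ Finset.range (N + 1), f i = f N := by
    rw [Finset.sum_range_succ]
    have : ∑ i ∈ Finset.range N, f i = 0 := by
      apply Finset.sum_eq_zero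
      intro i hi
      simp only [hf]
      rw [hlt i (Finset.mem_range.mp hi)]
      ring
    rw [this, zero_add]
  rw [hrange, zero_sub] at hsum'
  -- majorant: geometric series
  have hr : (1 : ℝ) / 6 < 1 := by norm_num
  have hr0 : (0 : ℝ) ≤ 1 / 6 := by norm_num
  have hgeo : HasSum (fun n : ℕ => ((5 : ℝ) / 6 ^ (N + 2)) * (1 / 6) ^ n)
      (((5 : ℝ) / 6 ^ (N + 2)) * (1 - 1 / 6)⁻¹) :=
    (hasSum_geometric_of_lt_one hr0 hr).mul_left _
  have hmaj : ∀ n : ℕ, ‖f (n + (N + 1))‖ ≤ ((5 : ℝ) / 6 ^ (N + 2)) * (1 / 6) ^ n := by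
    intro n
    simp only [hf, Real.norm_eq_abs, abs_div]
    have h6 : |(6 : ℝ) ^ (n + (N + 1) + 1)| = 6 ^ (n + (N + 1) + 1) := abs_of_pos (by positivity)
    rw [h6]
    rw [div_le_iff₀ (by positivity)]
    have : ((5 : ℝ) / 6 ^ (N + 2)) * (1 / 6) ^ n * 6 ^ (n + (N + 1) + 1) = 5 := by
      rw [div_pow, one_pow]
      field_simp
      rw [show n + (N + 1) + 1 = n + (N + 2) by ring, pow_add]
      ring
    rw [this]
    exact hub _
  have hnorm : ‖-f N‖ ≤ ((5 : ℝ) / 6 ^ (N + 2)) * (1 - 1 / 6)⁻¹ := by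
    have hsummaj : Summable fun n : ℕ => ((5 : ℝ) / 6 ^ (N + 2)) * (1 / 6) ^ n := hgeo.summable
    calc ‖-f N‖ = ‖∑' n, f (n + (N + 1))‖ := by rw [hsum'.tsum_eq]
      _ ≤ ∑' n, ‖f (n + (N + 1))‖ := by
          apply norm_tsum_le_tsum_norm
          exact Summable.of_nonneg_of_le (fun n => norm_nonneg _) hmaj hsummaj
      _ ≤ ∑' n, ((5 : ℝ) / 6 ^ (N + 2)) * (1 / 6) ^ n := by
          apply Summable.tsum_le_tsum hmaj
          · exact Summable.of_nonneg_of_le (fun n => norm_nonneg _) hmaj hsummaj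
          · exact hsummaj
      _ = ((5 : ℝ) / 6 ^ (N + 2)) * (1 - 1 / 6)⁻¹ := hgeo.tsum_eq
  have hval : ((5 : ℝ) / 6 ^ (N + 2)) * (1 - 1 / 6)⁻¹ = 1 / 6 ^ (N + 1) := by
    rw [show (N + 2) = (N + 1) + 1 by ring, pow_succ]
    field_simp
    ring
  rw [hval, norm_neg, hf, Real.norm_eq_abs, abs_div,
    abs_of_pos (by positivity : (0:ℝ) < 6 ^ (N + 1)),
    div_le_div_iff₀ (by positivity) (by positivity)] at hnorm
  have h1 : |d N| ≤ 1 := by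
    have h6pos : (0 : ℝ) < 6 ^ (N + 1) := by positivity
    nlinarith [hnorm]
  rcases hd N with h0 | h52
  · exact hdN h0
  · linarith

theorem midpoint_not_mem_cantorMiddleTwoThirds
    {b b' : ℝ} (hb : b ∈ CantorMiddleTwoThirds) (hb' : b' ∈ CantorMiddleTwoThirds)
    (hne : b ≠ b') : (b + b') / 2 ∉ CantorMiddleTwoThirds := by
  obtain ⟨a, ha, hsa⟩ := hb
  obtain ⟨a', ha', hsa'⟩ := hb'
  rintro ⟨c, hc, hsc⟩
  -- midpoint digit series
  have hmid : HasSum (fun n => (a n + a' n) / 2 / 6 ^ (n + 1)) ((b + b') / 2) := by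
    have := (hsa.add hsa').div_const 2
    convert this using 2 with n
    exacts [rfl, by ring]
  set d : ℕ → ℝ := fun n => (a n + a' n) / 2 - c n with hdd
  have hsum0 : HasSum (fun n => d n / 6 ^ (n + 1)) 0 := by
    have := hmid.sub hsc
    simpa [hdd, sub_div] using this
  have habs : ∀ x : ℝ, x = 5 / 2 ∨ x = -(5 / 2) ∨ x = 5 ∨ x = -5 →
      5 / 2 ≤ |x| ∧ |x| ≤ 5 := by
    intro x hx
    rcases abs_cases x with ⟨h, h'⟩ | ⟨h, h'⟩ <;> rcases hx with rfl | rfl | rfl | rfl <;>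
      constructor <;> linarith
  have hcase : ∀ n, d n = 0 ∨ (d n = 5 / 2 ∨ d n = -(5 / 2) ∨ d n = 5 ∨ d n = -5) := by
    intro n
    rcases ha n with h1 | h1 <;> rcases ha' n with h2 | h2 <;> rcases hc n with h3 | h3 <;>
      simp only [hdd, h1, h2, h3] <;> norm_num
  have hd : ∀ n, d n = 0 ∨ 5 / 2 ≤ |d n| := by
    intro n
    rcases hcase n with h | h
    · exact Or.inl h
    · exact Or.inr (habs _ h).1
  have hub : ∀ n, |d n| ≤ 5 := by
    intro n
    rcases hcase n with h | h
    · rw [h]; norm_num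
    · exact (habs _ h).2
  have hzero := cantor_digits_zero d hd hub hsum0
  -- conclude a = a'
  have haa' : ∀ n, a n = a' n := by
    intro n
    have h := hzero n
    simp only [hdd, sub_eq_zero] at h
    rcases ha n with h1 | h1 <;> rcases ha' n with h2 | h2 <;> rw [h1, h2] <;>
      rw [h1, h2] at h <;> rcases hc n with h3 | h3 <;> rw [h3] at h <;> norm_num at h
  have : b = b' := by
    apply hsa.unique
    convert hsa' using 2 with n
    rw [haa' n]
  exact hne this
end

section
/- Let Δ ⊆ ℝ be a set with the property that the midpoint of any two distinct points of Δ does not belong to Δ. Let L ⊆ Δ be a nonempty compact subset and let b ∈ Δ. Then there exists a unique a ∈ L such that |b − a| = dist(b, L), i.e. the nearest-point projection of b onto L is unique. -/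
/-- If `Δ ⊆ ℝ` contains no midpoint of two of its distinct points, `L ⊆ Δ` is a
nonempty compact set and `b ∈ Δ`, then the nearest point of `L` to `b` is unique. -/
theorem unique_nearest_point_of_midpoint_free
    (Δ : Set ℝ) (hΔ : ∀ b ∈ Δ, ∀ b' ∈ Δ, b ≠ b' → (b + b') / 2 ∉ Δ)
    (L : Set ℝ) (hLΔ : L ⊆ Δ) (hLne : L.Nonempty) (hLc : IsCompact L)
    (b : ℝ) (hb : b ∈ Δ) :
    ∃! a : ℝ, a ∈ L ∧ |b - a| = Metric.infDist b L := by
  obtain ⟨a, haL, ha⟩ := hLc.exists_infDist_eq_dist hLne b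
  refine ⟨a, ⟨haL, by rw [← Real.dist_eq, ha]⟩, ?_⟩
  rintro a' ⟨ha'L, ha'⟩
  by_contra hne
  have h1 : |b - a'| = |b - a| := by rw [ha', ← Real.dist_eq, ha]
  have hba : b - a' ≠ b - a := fun h => hne (by linarith)
  have : b - a' = -(b - a) := by
    rcases abs_eq_abs.mp h1 with h | h
    · exact absurd h hba
    · exact h
  have hbmid : b = (a' + a) / 2 := by linarith
  exact hΔ a' (hLΔ ha'L) a (hLΔ haL) hne (hbmid ▸ hb)
end

section
/- With the notation of the previous statement, define ζ : P → ℝ^ℕ × ℝ^ℕ by ζ(a) = (θ(a), (F_n(θ(a))^{-1})_{n∈ℕ}). Then ζ(P) is a closed subset of ℝ^ℕ × ℝ^ℕ and ζ is a homeomorphism from P onto ζ(P). In particular, every Polish space is homeomorphic to a closed subset of ℝ^ℕ. -/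
open Finset


open Finset Filter Topology

section Aux

variable {P : Type*} [MetricSpace P]

noncomputable def MM (a : ℕ → P) (z : ℕ → ℝ) (r : ℕ) : ℝ :=
  (Finset.range (r + 1)).sup' (Finset.nonempty_range_iff.mpr (Nat.succ_ne_zero _))
    (fun k => |z k - dist (a r) (a k)|)

noncomputable def GG (a : ℕ → P) (n : ℕ) (z : ℕ → ℝ) : ℝ :=
  ∑' j : ℕ, (2 : ℝ)⁻¹ ^ (n + j) * max 0 (1 - (n : ℝ) * MM a z (n + j))

variable (a : ℕ → P) (z : ℕ → ℝ)

lemma abs_le_MM {k r : ℕ} (h : k ≤ r) : |z k - dist (a r) (a k)| ≤ MM a z r := by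
  unfold MM
  exact Finset.le_sup' (fun k => |z k - dist (a r) (a k)|) (Finset.mem_range.mpr (Nat.lt_succ_of_le h))

lemma MM_nonneg (r : ℕ) : 0 ≤ MM a z r :=
  (abs_nonneg _).trans (abs_le_MM a z (Nat.zero_le r))

lemma MM_theta_le (p : P) (r : ℕ) : MM a (fun k => dist p (a k)) r ≤ dist p (a r) := by
  apply Finset.sup'_le
  intro k _
  exact abs_dist_sub_le p (a r) (a k)

lemma term_nonneg (n j : ℕ) : 0 ≤ (2 : ℝ)⁻¹ ^ (n + j) * max 0 (1 - (n : ℝ) * MM a z (n + j)) :=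
  mul_nonneg (pow_nonneg (by norm_num) _) (le_max_left _ _)

lemma term_le (n j : ℕ) :
    (2 : ℝ)⁻¹ ^ (n + j) * max 0 (1 - (n : ℝ) * MM a z (n + j)) ≤ (2 : ℝ)⁻¹ ^ (n + j) := by
  have h0 : (0:ℝ) ≤ (n : ℝ) * MM a z (n + j) :=
    mul_nonneg (Nat.cast_nonneg n) (MM_nonneg a z (n + j))
  have h1 : max 0 (1 - (n : ℝ) * MM a z (n + j)) ≤ 1 := max_le (by norm_num) (by linarith)
  calc (2 : ℝ)⁻¹ ^ (n + j) * max 0 (1 - (n : ℝ) * MM a z (n + j))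
      ≤ (2 : ℝ)⁻¹ ^ (n + j) * 1 := by
        exact mul_le_mul_of_nonneg_left h1 (pow_nonneg (by norm_num) _)
    _ = (2 : ℝ)⁻¹ ^ (n + j) := mul_one _

lemma summable_geom (n : ℕ) : Summable (fun j : ℕ => (2 : ℝ)⁻¹ ^ (n + j)) := by
  simpa [pow_add] using
    (summable_geometric_of_lt_one (by norm_num : (0:ℝ) ≤ 2⁻¹) (by norm_num)).mul_left
      ((2 : ℝ)⁻¹ ^ n)

lemma summable_term (n : ℕ) :
    Summable (fun j : ℕ => (2 : ℝ)⁻¹ ^ (n + j) * max 0 (1 - (n : ℝ) * MM a z (n + j))) :=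
  Summable.of_nonneg_of_le (term_nonneg a z n) (term_le a z n) (summable_geom n)

lemma GG_nonneg (n : ℕ) : 0 ≤ GG a n z := tsum_nonneg (term_nonneg a z n)

lemma MM_continuous (r : ℕ) : Continuous (fun z : ℕ → ℝ => MM a z r) := by
  unfold MM
  exact Continuous.finset_sup'_apply _
    (fun k _ => ((continuous_apply k).sub continuous_const).abs)

lemma GG_continuous (n : ℕ) : Continuous (GG a n) := by
  apply continuous_tsum (u := fun j : ℕ => (2 : ℝ)⁻¹ ^ (n + j))
  · intro j
    exact continuous_const.mul (continuous_const.max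
      (continuous_const.sub (continuous_const.mul (MM_continuous a (n + j)))))
  · exact summable_geom n
  · intro j z
    rw [Real.norm_eq_abs, abs_of_nonneg (term_nonneg a z n j)]
    exact term_le a z n j

lemma GG_pos {n j : ℕ} (h : (n : ℝ) * MM a z (n + j) < 1) : 0 < GG a n z := by
  refine Summable.tsum_pos (summable_term a z n) (term_nonneg a z n) j ?_
  exact mul_pos (pow_pos (by norm_num) _) (lt_max_iff.mpr (Or.inr (by linarith)))

lemma GG_zero {n : ℕ} (h : GG a n z = 0) (j : ℕ) : 1 ≤ (n : ℝ) * MM a z (n + j) := by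
  by_contra hc
  push_neg at hc
  exact absurd h.symm (ne_of_lt (GG_pos a z hc))

lemma dist_ge_of_GG_zero (p : P) {n : ℕ} (h : GG a n (fun k => dist p (a k)) = 0) :
    0 < n ∧ ∀ r, n ≤ r → 1 / (n : ℝ) ≤ dist p (a r) := by
  have h0 := GG_zero a _ h 0
  have hn : 0 < n := by
    rcases Nat.eq_zero_or_pos n with h' | h'
    · subst h'; norm_num at h0
    · exact h'
  have hn' : (0:ℝ) < n := by exact_mod_cast hn
  refine ⟨hn, fun r hr => ?_⟩
  obtain ⟨j, rfl⟩ := Nat.exists_eq_add_of_le hr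
  have h1 := GG_zero a _ h j
  have h2 := MM_theta_le a p (n + j)
  rw [div_le_iff₀ hn', mul_comm]
  nlinarith [MM_nonneg a (fun k => dist p (a k)) (n + j)]

lemma mem_of_GG_zero (ha : DenseRange a) (p : P) {n : ℕ}
    (h : GG a n (fun k => dist p (a k)) = 0) : p ∈ a '' Set.Iio n := by
  obtain ⟨hn, hd⟩ := dist_ge_of_GG_zero a p h
  have hfin : (a '' Set.Iio n).Finite := (Set.finite_Iio n).image a
  have hn' : (0:ℝ) < 1 / n := by positivity
  rw [← hfin.isClosed.closure_eq, Metric.mem_closure_iff]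
  intro ε hε
  obtain ⟨m, hm⟩ := Metric.denseRange_iff.mp ha p (min ε (1 / n)) (lt_min hε hn')
  refine ⟨a m, ⟨m, ?_, rfl⟩, hm.trans_le (min_le_left _ _)⟩
  simp only [Set.mem_Iio]
  by_contra hmn
  push_neg at hmn
  exact absurd (hd m hmn) (not_le.mpr (hm.trans_le (min_le_right _ _)))

lemma isOpen_of_GG_zero (ha : DenseRange a) (p : P) {n : ℕ}
    (h : GG a n (fun k => dist p (a k)) = 0) : IsOpen ({p} : Set P) := by
  obtain ⟨hn, hd⟩ := dist_ge_of_GG_zero a p h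
  have hn' : (0:ℝ) < 1 / n := by positivity
  have hfin2 : (a '' Set.Iio n).Finite := (Set.finite_Iio n).image a
  have hfin : ((a '' Set.Iio n) \ {p}).Finite := hfin2.diff
  have key : ({p} : Set P) = Metric.ball p (1 / n) \ ((a '' Set.Iio n) \ {p}) := by
    apply Set.eq_of_subset_of_subset
    · rintro x rfl
      exact ⟨Metric.mem_ball_self hn', fun hx => hx.2 rfl⟩
    · rintro q ⟨hq1, hq2⟩
      by_contra hqp
      simp only [Set.mem_singleton_iff] at hqp
      have hq : q ∈ a '' Set.Iio n := by
        rw [← hfin2.isClosed.closure_eq, Metric.mem_closure_iff]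
        intro ε hε
        have hdpq : dist p q < 1 / n := by rwa [Metric.mem_ball, dist_comm] at hq1
        have hpos : 0 < min ε (1 / n - dist p q) := lt_min hε (by linarith)
        obtain ⟨m, hm⟩ := Metric.denseRange_iff.mp ha q _ hpos
        have hpam : dist p (a m) < 1 / n := by
          have h2 := hm.trans_le (min_le_right _ _)
          calc dist p (a m) ≤ dist p q + dist q (a m) := dist_triangle _ _ _
            _ < dist p q + (1 / n - dist p q) := by linarith
            _ = 1 / n := by ring
        have hmlt : m < n := by
          by_contra hmn
          push_neg at hmn
          exact absurd (hd m hmn) (not_le.mpr hpam)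
        exact ⟨a m, ⟨m, hmlt, rfl⟩, hm.trans_le (min_le_left _ _)⟩
      exact hq2 ⟨hq, hqp⟩
  rw [key]
  exact Metric.isOpen_ball.sdiff hfin.isClosed

end Aux

/-- The map `ζ a = (θ a, (F n (θ a))⁻¹)` is a homeomorphism of the Polish space
`P` onto the closed subset `ζ(P)` of `ℝ^ℕ × ℝ^ℕ`. -/
theorem closedEmbedding_dist_embedding
    {P : Type*} [MetricSpace P] [CompleteSpace P]
    (a : ℕ → P) (ha : DenseRange a) (hd : ∀ x y : P, dist x y ≤ 1)
    (θ : P → ℕ → ℝ) (hθ : ∀ p n, θ p n = dist p (a n))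
    (κ : ℕ → ℝ → ℝ) (hκ : ∀ n t, κ n t = max 0 (1 - (n : ℝ) * t))
    (F : ℕ → (ℕ → ℝ) → ℝ)
    (hF : ∀ n z, F n z = ∑' j : ℕ, (2 : ℝ)⁻¹ ^ (n + j) *
      κ n ((Finset.range (n + j + 1)).sup'
        (Finset.nonempty_range_iff.mpr (Nat.succ_ne_zero _))
        (fun k => |z k - dist (a (n + j)) (a k)|)))
    (ζ : P → (ℕ → ℝ) × (ℕ → ℝ))
    (hζ : ∀ p, ζ p = (θ p, fun n => (F n (θ p))⁻¹)) :
    IsClosed (Set.range ζ) ∧ Topology.IsEmbedding ζ := by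
  have hθ' : θ = fun p k => dist p (a k) := funext fun p => funext fun k => hθ p k
  subst hθ'
  have hκ' : κ = fun (n : ℕ) (t : ℝ) => max 0 (1 - (n : ℝ) * t) :=
    funext fun n => funext fun t => hκ n t
  subst hκ'
  have hF' : F = fun n => GG a n := by
    funext n z
    rw [hF]
    rfl
  subst hF'
  have hζ' : ζ = fun p =>
      ((fun k => dist p (a k)), fun n => (GG a n (fun k => dist p (a k)))⁻¹) := by
    funext p
    exact hζ p
  subst hζ'
  -- continuity of the two components
  have hΘc : Continuous (fun p : P => (fun k => dist p (a k) : ℕ → ℝ)) :=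
    continuous_pi fun k => continuous_id.dist continuous_const
  have hinvc : ∀ n : ℕ, Continuous fun p : P => (GG a n (fun k => dist p (a k)))⁻¹ := by
    intro n
    rw [continuous_iff_continuousAt]
    intro p
    by_cases h : GG a n (fun k => dist p (a k)) = 0
    · have hopen := isOpen_of_GG_zero a ha p h
      rw [isOpen_singleton_iff_nhds_eq_pure] at hopen
      unfold ContinuousAt
      rw [hopen]
      exact tendsto_pure_nhds _ _
    · exact (((GG_continuous a n).comp hΘc).continuousAt).inv₀ h
  have hζc : Continuous (fun p : P =>
      ((fun k => dist p (a k) : ℕ → ℝ), fun n => (GG a n (fun k => dist p (a k)))⁻¹)) :=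
    hΘc.prodMk (continuous_pi fun n => hinvc n)
  constructor
  · -- closedness
    apply IsSeqClosed.isClosed
    intro x L hx hL
    choose p hp using hx
    rw [show x = fun i => ((fun k => dist (p i) (a k) : ℕ → ℝ),
        fun n => (GG a n (fun k => dist (p i) (a k)))⁻¹) from funext fun i => (hp i).symm] at hL
    have h1 : Filter.Tendsto (fun i => (fun k => dist (p i) (a k) : ℕ → ℝ))
        Filter.atTop (𝓝 L.1) := by
      have := (continuous_fst.tendsto L).comp hL
      exact this
    have hw : ∀ n, Filter.Tendsto (fun i => (GG a n (fun k => dist (p i) (a k)))⁻¹)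
        Filter.atTop (𝓝 (L.2 n)) := by
      intro n
      have h2 : Filter.Tendsto (fun i => (fun n => (GG a n (fun k => dist (p i) (a k)))⁻¹ : ℕ → ℝ))
          Filter.atTop (𝓝 L.2) := by
        have := (continuous_snd.tendsto L).comp hL
        exact this
      exact tendsto_pi_nhds.mp h2 n
    have hG : ∀ n, Filter.Tendsto (fun i => GG a n (fun k => dist (p i) (a k)))
        Filter.atTop (𝓝 (GG a n L.1)) :=
      fun n => ((GG_continuous a n).tendsto _).comp h1
    -- if GG a n L.1 = 0 then frequently GG of the sequence is 0
    have hkey : ∀ n, GG a n L.1 = 0 →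
        ∃ᶠ i in Filter.atTop, GG a n (fun k => dist (p i) (a k)) = 0 := by
      intro n h0
      by_contra hc
      rw [Filter.not_frequently] at hc
      have hmul : Filter.Tendsto
          (fun i => (GG a n (fun k => dist (p i) (a k)))⁻¹ * GG a n (fun k => dist (p i) (a k)))
          Filter.atTop (𝓝 (L.2 n * 0)) := (hw n).mul (h0 ▸ hG n)
      have hone : Filter.Tendsto
          (fun i => (GG a n (fun k => dist (p i) (a k)))⁻¹ * GG a n (fun k => dist (p i) (a k)))
          Filter.atTop (𝓝 1) := by
        apply Filter.Tendsto.congr' ?_ tendsto_const_nhds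
        filter_upwards [hc] with i hi
        exact (inv_mul_cancel₀ hi).symm
      have := tendsto_nhds_unique hone hmul
      norm_num at this
    have hstep1 : ∀ n, L.2 n = (GG a n L.1)⁻¹ := by
      intro n
      by_cases h0 : GG a n L.1 = 0
      · rw [h0, inv_zero]
        have hfreq : ∃ᶠ i in Filter.atTop,
            (GG a n (fun k => dist (p i) (a k)))⁻¹ ∈ ({0} : Set ℝ) :=
          (hkey n h0).mono (fun i hi => by simp [hi])
        have := mem_closure_of_frequently_of_tendsto hfreq (hw n)
        rwa [closure_singleton, Set.mem_singleton_iff] at this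
      · exact tendsto_nhds_unique (hw n) ((hG n).inv₀ h0)
    have hstep2 : ∃ q : P, (fun k => dist q (a k)) = L.1 := by
      by_cases hall : ∀ n, GG a n L.1 ≠ 0
      · have hsel : ∀ n : ℕ, ∃ j, (n : ℝ) * MM a L.1 (n + j) < 1 := by
          intro n
          by_contra hc
          push_neg at hc
          apply hall n
          have hterm : ∀ j, (2 : ℝ)⁻¹ ^ (n + j) * max 0 (1 - (n : ℝ) * MM a L.1 (n + j)) = 0 := by
            intro j
            have h' : max 0 (1 - (n : ℝ) * MM a L.1 (n + j)) = 0 :=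
              max_eq_left (by linarith [hc j])
            rw [h', mul_zero]
          calc GG a n L.1 = ∑' _ : ℕ, (0 : ℝ) := tsum_congr hterm
            _ = 0 := tsum_zero
        choose j hj using hsel
        set r : ℕ → ℕ := fun n => n + j n with hr
        have hM : ∀ n : ℕ, 1 ≤ n → MM a L.1 (r n) < 1 / n := by
          intro n hn
          have hn' : (0:ℝ) < n := by exact_mod_cast hn
          rw [lt_div_iff₀ hn', mul_comm]
          exact hj n
        have key : ∀ s t : ℕ, 1 ≤ s → 1 ≤ t → r s ≤ r t →
            dist (a (r s)) (a (r t)) < 1 / s + 1 / t := by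
          intro s t hs ht hst
          have h1' : |L.1 (r s) - dist (a (r t)) (a (r s))| ≤ MM a L.1 (r t) :=
            abs_le_MM a L.1 hst
          have h2' : |L.1 (r s) - dist (a (r s)) (a (r s))| ≤ MM a L.1 (r s) :=
            abs_le_MM a L.1 le_rfl
          rw [dist_self, sub_zero] at h2'
          have hMs := hM s hs
          have hMt := hM t ht
          have e1 := abs_le.mp h1'
          have e2 := abs_le.mp h2'
          rw [dist_comm]
          linarith [e1.1, e2.2]
        have hcau : CauchySeq (fun n => a (r n)) := by
          rw [Metric.cauchySeq_iff]
          intro ε hε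
          obtain ⟨N, hN⟩ := exists_nat_gt (2 / ε)
          have hN1 : 1 ≤ N := by
            by_contra hN1
            push_neg at hN1
            interval_cases N
            · simp at hN
              have : (0:ℝ) < 2 / ε := by positivity
              linarith
          have hNpos : (0:ℝ) < N := by exact_mod_cast hN1
          have h2N : 1 / (N:ℝ) + 1 / N < ε := by
            rw [← add_div]
            rw [div_lt_iff₀ hNpos]
            rw [div_lt_iff₀ hε] at hN
            linarith
          refine ⟨N, fun m hm n hn => ?_⟩
          have hm1 : 1 ≤ m := le_trans hN1 hm
          have hn1 : 1 ≤ n := le_trans hN1 hn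
          have hmono : ∀ u : ℕ, N ≤ u → 1 / (u:ℝ) ≤ 1 / N := by
            intro u hu
            apply one_div_le_one_div_of_le hNpos
            exact_mod_cast hu
          rcases le_total (r m) (r n) with h | h
          · have := key m n hm1 hn1 h
            have := hmono m hm
            have := hmono n hn
            linarith
          · have := key n m hn1 hm1 h
            rw [dist_comm]
            have := hmono m hm
            have := hmono n hn
            linarith
        obtain ⟨q, hq⟩ := cauchySeq_tendsto_of_complete hcau
        refine ⟨q, funext fun k => ?_⟩
        have hdk : Filter.Tendsto (fun n => dist (a (r n)) (a k))
            Filter.atTop (𝓝 (dist q (a k))) :=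
          ((continuous_id.dist continuous_const).tendsto q).comp hq
        have hdk' : Filter.Tendsto (fun n => dist (a (r n)) (a k))
            Filter.atTop (𝓝 (L.1 k)) := by
          rw [Metric.tendsto_atTop]
          intro ε hε
          obtain ⟨N, hN⟩ := exists_nat_gt (1 / ε)
          refine ⟨max N (max k 1), fun n hn => ?_⟩
          have hkn : k ≤ n := le_trans (le_max_left k 1) (le_trans (le_max_right _ _) hn)
          have h1n : 1 ≤ n := le_trans (le_max_right k 1) (le_trans (le_max_right _ _) hn)
          have hNn : N ≤ n := le_trans (le_max_left _ _) hn
          have hkr : k ≤ r n := le_trans hkn (Nat.le_add_right n (j n))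
          have hb : |L.1 k - dist (a (r n)) (a k)| ≤ MM a L.1 (r n) := abs_le_MM a L.1 hkr
          have hMn := hM n h1n
          have hn' : (0:ℝ) < n := by exact_mod_cast h1n
          have hNe : 1 / (n:ℝ) < ε := by
            have hNpos : (0:ℝ) < N := lt_of_le_of_lt (by positivity) hN
            have h1 : 1 / (n:ℝ) ≤ 1 / N := by
              apply one_div_le_one_div_of_le hNpos
              exact_mod_cast hNn
            have h2 : 1 / (N:ℝ) < ε := by
              rw [div_lt_iff₀ hNpos]
              rw [div_lt_iff₀ hε] at hN
              linarith
            linarith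
          rw [Real.dist_eq, abs_sub_comm]
          linarith [hb]
        exact tendsto_nhds_unique hdk hdk'
      · push_neg at hall
        obtain ⟨n, h0⟩ := hall
        have hfr2 : ∃ᶠ i in Filter.atTop, p i ∈ a '' Set.Iio n :=
          (hkey n h0).mono (fun i hi => mem_of_GG_zero a ha (p i) hi)
        have hfin : (a '' Set.Iio n).Finite := (Set.finite_Iio n).image a
        have hex : ∃ q ∈ a '' Set.Iio n, ∃ᶠ i in Filter.atTop, p i = q := by
          by_contra hc
          push_neg at hc
          have he : ∀ᶠ i in Filter.atTop, ∀ q ∈ a '' Set.Iio n, p i ≠ q :=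
            (eventually_all_finite hfin).mpr
              (fun q hq => hc q hq)
          obtain ⟨i, hi1, hi2⟩ := (hfr2.and_eventually he).exists
          exact hi2 _ hi1 rfl
        obtain ⟨q, _, hfq⟩ := hex
        refine ⟨q, ?_⟩
        have hfreq : ∃ᶠ i in Filter.atTop,
            (fun k => dist (p i) (a k) : ℕ → ℝ) ∈ ({fun k => dist q (a k)} : Set (ℕ → ℝ)) :=
          hfq.mono (fun i hi => by rw [hi]; rfl)
        have := mem_closure_of_frequently_of_tendsto hfreq h1
        rw [closure_singleton, Set.mem_singleton_iff] at this
        exact this.symm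
    obtain ⟨q, hq⟩ := hstep2
    refine ⟨q, ?_⟩
    show ((fun k => dist q (a k) : ℕ → ℝ), fun n => (GG a n (fun k => dist q (a k)))⁻¹) = L
    rw [Prod.ext_iff]
    refine ⟨hq, funext fun n => ?_⟩
    show (GG a n (fun k => dist q (a k)))⁻¹ = L.2 n
    rw [hq, hstep1 n]
  · -- embedding
    refine ⟨Topology.isInducing_iff_nhds.mpr fun p =>
      le_antisymm (tendsto_iff_comap.mp hζc.continuousAt) ?_, ?_⟩
    · intro s hs
      rw [Metric.mem_nhds_iff] at hs
      obtain ⟨ε, hε, hball⟩ := hs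
      obtain ⟨m, hm⟩ := Metric.denseRange_iff.mp ha p (ε / 3) (by positivity)
      rw [Filter.mem_comap]
      refine ⟨(fun y : (ℕ → ℝ) × (ℕ → ℝ) => y.1 m) ⁻¹' Metric.ball (dist p (a m)) (ε / 3),
        ?_, ?_⟩
      · apply IsOpen.mem_nhds
          (Metric.isOpen_ball.preimage ((continuous_apply m).comp continuous_fst))
        simp only [Set.mem_preimage]
        exact Metric.mem_ball_self (by positivity)
      · intro q hq
        simp only [Set.mem_preimage, Metric.mem_ball, Real.dist_eq] at hq
        apply hball
        rw [Metric.mem_ball]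
        have h3 := abs_lt.mp hq
        calc dist q p ≤ dist q (a m) + dist (a m) p := dist_triangle _ _ _
          _ < (dist p (a m) + ε / 3) + dist p (a m) := by
              rw [dist_comm (a m) p]; linarith [h3.2]
          _ < ε := by linarith
    · intro p q hpq
      have h1 : ∀ k, dist p (a k) = dist q (a k) := by
        intro k
        have := congrArg Prod.fst hpq
        simpa using congrFun this k
      by_contra hne
      have hpos : 0 < dist p q := dist_pos.mpr hne
      obtain ⟨m, hm⟩ := Metric.denseRange_iff.mp ha p (dist p q / 2) (by positivity)
      have : dist p q ≤ dist p (a m) + dist (a m) q := dist_triangle _ _ _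
      rw [dist_comm (a m) q, ← h1 m] at this
      linarith
end

section
/- Let (Ω, 𝓕) be a measurable space and μ a finite signed measure on Ω with Jordan decomposition μ = μ⁺ − μ⁻. Then the distance, in total variation norm, from μ to the cone of finite (nonnegative) measures on Ω equals ‖μ⁻‖ = μ⁻(Ω). Moreover, μ⁻(Ω) = sup { −∫ f dμ : f measurable, 0 ≤ f ≤ 1 }. -/
open MeasureTheory

/-- The total variation norm of a finite signed measure. -/
noncomputable def tvNorm {Ω : Type*} [MeasurableSpace Ω] (ν : SignedMeasure Ω) : ℝ :=
  (ν.totalVariation Set.univ).toReal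

section aux

variable {Ω : Type*} [MeasurableSpace Ω]

lemma signed_apply (μ : SignedMeasure Ω) {s : Set Ω} (hs : MeasurableSet s) :
    μ s = (μ.toJordanDecomposition.posPart s).toReal
        - (μ.toJordanDecomposition.negPart s).toReal := by
  conv_lhs => rw [← μ.toSignedMeasure_toJordanDecomposition]
  rw [JordanDecomposition.toSignedMeasure, VectorMeasure.sub_apply,
    Measure.toSignedMeasure_apply_measurable hs, Measure.toSignedMeasure_apply_measurable hs,
    measureReal_def, measureReal_def]

lemma tv_lower (μ : SignedMeasure Ω) {s : Set Ω} (hs : MeasurableSet s) :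
    -μ s ≤ tvNorm μ := by
  have h := signed_apply μ hs
  have h1 : μ.toJordanDecomposition.negPart s ≤ μ.totalVariation Set.univ := by
    rw [SignedMeasure.totalVariation, Measure.add_apply]
    exact le_trans (measure_mono (Set.subset_univ _)) (le_add_of_nonneg_left zero_le)
  have hfin : μ.totalVariation Set.univ ≠ ⊤ := by
    rw [SignedMeasure.totalVariation, Measure.add_apply]
    exact ENNReal.add_ne_top.2 ⟨measure_ne_top _ _, measure_ne_top _ _⟩
  have h1' : (μ.toJordanDecomposition.negPart s).toReal ≤ tvNorm μ :=
    ENNReal.toReal_mono hfin h1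
  have h2 : (0:ℝ) ≤ (μ.toJordanDecomposition.posPart s).toReal := ENNReal.toReal_nonneg
  rw [h]; linarith

end aux

/-- The total-variation distance from a finite signed measure `μ` to the cone of
finite nonnegative measures equals `‖μ⁻‖ = μ⁻(Ω)`, which in turn equals
`sup { −∫ f dμ : f measurable, 0 ≤ f ≤ 1 }`. -/
theorem dist_to_cone_of_measures_eq_negPart
    {Ω : Type*} [MeasurableSpace Ω] (μ : SignedMeasure Ω) :
    sInf {t : ℝ | ∃ (lam : Measure Ω) (hl : IsFiniteMeasure lam),
        t = tvNorm (μ - @Measure.toSignedMeasure Ω _ lam hl)} =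
      (μ.toJordanDecomposition.negPart Set.univ).toReal ∧
    (μ.toJordanDecomposition.negPart Set.univ).toReal =
      sSup {r : ℝ | ∃ f : Ω → ℝ, Measurable f ∧ (∀ x, 0 ≤ f x ∧ f x ≤ 1) ∧
        r = (∫ x, f x ∂μ.toJordanDecomposition.negPart)
            - ∫ x, f x ∂μ.toJordanDecomposition.posPart} := by
  set p := μ.toJordanDecomposition.posPart with hp
  set n := μ.toJordanDecomposition.negPart with hn
  obtain ⟨S, hS, hpS, hnS⟩ := μ.toJordanDecomposition.mutuallySingular
  have hnSuniv : n S = n Set.univ := by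
    have := measure_add_measure_compl (μ := n) hS
    rw [hnS, add_zero] at this; exact this
  -- the candidate λ = p achieves the distance
  have hmem : (n Set.univ).toReal ∈ {t : ℝ | ∃ (lam : Measure Ω) (hl : IsFiniteMeasure lam),
      t = tvNorm (μ - @Measure.toSignedMeasure Ω _ lam hl)} := by
    refine ⟨p, inferInstance, ?_⟩
    have hμ : μ - p.toSignedMeasure = -(n.toSignedMeasure) := by
      show μ - (μ.toJordanDecomposition.posPart).toSignedMeasure =
        -(μ.toJordanDecomposition.negPart).toSignedMeasure
      have hthis := μ.toSignedMeasure_toJordanDecomposition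
      rw [JordanDecomposition.toSignedMeasure] at hthis
      calc μ - (μ.toJordanDecomposition.posPart).toSignedMeasure
          = ((μ.toJordanDecomposition.posPart).toSignedMeasure
              - (μ.toJordanDecomposition.negPart).toSignedMeasure)
            - (μ.toJordanDecomposition.posPart).toSignedMeasure := by rw [hthis]
        _ = -(μ.toJordanDecomposition.negPart).toSignedMeasure := by abel
    rw [hμ]
    unfold tvNorm
    rw [SignedMeasure.totalVariation_neg]
    have : (n.toSignedMeasure).totalVariation = n := by
      have h0 : (n.toSignedMeasure).toJordanDecomposition =
          ⟨n, 0, Measure.MutuallySingular.zero_right⟩ := by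
        apply SignedMeasure.toJordanDecomposition_eq
        rw [JordanDecomposition.toSignedMeasure]
        simp
      rw [SignedMeasure.totalVariation, h0]
      simp
    rw [this]
  -- lower bound: every element of the set is ≥ (n univ).toReal
  have hlb : ∀ t ∈ {t : ℝ | ∃ (lam : Measure Ω) (hl : IsFiniteMeasure lam),
      t = tvNorm (μ - @Measure.toSignedMeasure Ω _ lam hl)},
      (n Set.univ).toReal ≤ t := by
    rintro t ⟨lam, hl, rfl⟩
    have key : -(μ - @Measure.toSignedMeasure Ω _ lam hl) S ≤
        tvNorm (μ - @Measure.toSignedMeasure Ω _ lam hl) := tv_lower _ hS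
    have happ : (μ - @Measure.toSignedMeasure Ω _ lam hl) S =
        μ S - (lam S).toReal := by
      rw [VectorMeasure.sub_apply, @Measure.toSignedMeasure_apply_measurable Ω _ lam hl _ hS,
        measureReal_def]
    have hμS : μ S = -(n Set.univ).toReal := by
      rw [signed_apply μ hS, ← hp, ← hn, hpS, hnSuniv]
      simp
    have hlamS : (0:ℝ) ≤ (lam S).toReal := ENNReal.toReal_nonneg
    rw [happ, hμS] at key
    linarith
  constructor
  · exact le_antisymm (csInf_le ⟨_, hlb⟩ hmem) (le_csInf ⟨_, hmem⟩ hlb)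
  · -- second part
    set A := {r : ℝ | ∃ f : Ω → ℝ, Measurable f ∧ (∀ x, 0 ≤ f x ∧ f x ≤ 1) ∧
        r = (∫ x, f x ∂n) - ∫ x, f x ∂p}
    have hub : ∀ r ∈ A, r ≤ (n Set.univ).toReal := by
      rintro r ⟨f, hf, hf01, rfl⟩
      have hint : Integrable f n := by
        refine Integrable.mono' (integrable_const (1:ℝ)) hf.aestronglyMeasurable ?_
        filter_upwards with x
        rw [Real.norm_eq_abs, abs_le]
        exact ⟨by linarith [(hf01 x).1], (hf01 x).2⟩
      have h1 : ∫ x, f x ∂n ≤ ∫ _x, (1:ℝ) ∂n :=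
        integral_mono hint (integrable_const 1) fun x => (hf01 x).2
      have h2 : ∫ _x, (1:ℝ) ∂n = (n Set.univ).toReal := by simp; rfl
      have h3 : (0:ℝ) ≤ ∫ x, f x ∂p := integral_nonneg fun x => (hf01 x).1
      linarith [h1.trans_eq h2]
    have hmem2 : (n Set.univ).toReal ∈ A := by
      refine ⟨S.indicator 1, measurable_one.indicator hS, ?_, ?_⟩
      · intro x
        by_cases hx : x ∈ S <;> simp [Set.indicator, hx]
      · rw [integral_indicator_one hS, integral_indicator_one hS,
          measureReal_def, measureReal_def, hnSuniv, hpS]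
        simp
    exact le_antisymm (le_csSup ⟨_, hub⟩ hmem2) (csSup_le ⟨_, hmem2⟩ hub)
end

section
/- Let K and L be nonempty compact Hausdorff connected spaces and let α : C(K,ℂ) ⊕ C(L,ℂ) → C(K,ℂ) ⊕ C(L,ℂ) be a surjective linear isometry, where the direct sum carries the supremum norm ‖(f,g)‖ = max(‖f‖_∞, ‖g‖_∞). Then either α(C(K,ℂ) ⊕ {0}) = C(K,ℂ) ⊕ {0}, or α(C(K,ℂ) ⊕ {0}) = {0} ⊕ C(L,ℂ) (the latter can only occur when K and L are homeomorphic). -/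
open ContinuousMap

private lemma aux_real01 (a : ℂ) (h : ‖a‖ + ‖1 - a‖ ≤ 1) :
    a = ((a.re : ℝ) : ℂ) ∧ 0 ≤ a.re ∧ a.re ≤ 1 := by
  have h1 : a.re ≤ ‖a‖ := Complex.re_le_norm a
  have h2 : 1 - a.re ≤ ‖1 - a‖ := by simpa using Complex.re_le_norm (1 - a)
  have habs : ‖a‖ = a.re := by linarith
  have him : a.im = 0 := by
    have := Complex.sq_norm a
    rw [habs, Complex.normSq_apply] at this
    nlinarith
  refine ⟨by simp [Complex.ext_iff, him], by rw [← habs]; exact norm_nonneg a, ?_⟩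
  nlinarith [norm_nonneg (1 - a)]

private lemma aux_tangent (s a : ℂ) (t : ℝ) (hs : s ≠ 0)
    (h1 : ‖a‖ = t * ‖s‖) (h2 : ‖s - a‖ = (1 - t) * ‖s‖) :
    a = (t : ℂ) * s := by
  have hN : 0 < s.re ^ 2 + s.im ^ 2 := by
    have := Complex.normSq_pos.mpr hs
    rw [Complex.normSq_apply] at this; nlinarith
  have h1' : a.re ^ 2 + a.im ^ 2 = t ^ 2 * (s.re ^ 2 + s.im ^ 2) := by
    have := congrArg (· ^ 2) h1
    simp only [mul_pow, Complex.sq_norm, Complex.normSq_apply] at this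
    nlinarith [this]
  have h2' : (s.re - a.re) ^ 2 + (s.im - a.im) ^ 2 = (1 - t) ^ 2 * (s.re ^ 2 + s.im ^ 2) := by
    have := congrArg (· ^ 2) h2
    simp only [mul_pow, Complex.sq_norm, Complex.normSq_apply, Complex.sub_re,
      Complex.sub_im] at this
    nlinarith [this]
  have hc : s.re * a.re + s.im * a.im = t * (s.re ^ 2 + s.im ^ 2) := by
    linear_combination (h1' - h2') / 2
  have hd : (s.re * a.im - s.im * a.re) ^ 2 = 0 := by
    have key : (s.re * a.im - s.im * a.re) ^ 2 =
        (s.re ^ 2 + s.im ^ 2) * (a.re ^ 2 + a.im ^ 2) -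
          (s.re * a.re + s.im * a.im) ^ 2 := by ring
    rw [key, h1', hc]; ring
  have hd0 : s.re * a.im - s.im * a.re = 0 := sq_eq_zero_iff.mp hd
  have hre : a.re = t * s.re :=
    mul_right_cancel₀ (ne_of_gt hN) (by linear_combination s.re * hc - s.im * hd0)
  have him : a.im = t * s.im :=
    mul_right_cancel₀ (ne_of_gt hN) (by linear_combination s.im * hc + s.re * hd0)
  simp [Complex.ext_iff, Complex.mul_re, Complex.mul_im, hre, him]

set_option maxHeartbeats 1000000 in
private theorem keyA {X : Type*} [TopologicalSpace X] [CompactSpace X] [T2Space X] [Nonempty X]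
    (P : C(X, ℂ) →ₗ[ℂ] C(X, ℂ))
    (hM : ∀ z w : C(X, ℂ), ‖P z + (w - P w)‖ = max ‖P z‖ ‖w - P w‖) :
    ∀ (z : C(X, ℂ)) (x : X), P z x = P 1 x * z x := by
  classical
  have hone : ‖(1 : C(X, ℂ))‖ = 1 := by
    apply le_antisymm
    · rw [ContinuousMap.norm_le _ zero_le_one]; intro x; simp
    · obtain ⟨x⟩ := ‹Nonempty X›
      simpa using ContinuousMap.norm_coe_le_norm (1 : C(X, ℂ)) x
  have hPnorm : ∀ z : C(X, ℂ), ‖P z‖ ≤ ‖z‖ ∧ ‖z - P z‖ ≤ ‖z‖ := by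
    intro z
    have := hM z z
    rw [add_sub_cancel] at this
    rw [this]
    exact ⟨le_max_left _ _, le_max_right _ _⟩
  have hm1 : max ‖P 1‖ ‖1 - P 1‖ = 1 := by
    have := hM 1 1
    rw [add_sub_cancel, hone] at this
    exact this.symm
  -- pointwise additivity of moduli across the two ranges
  have hsum : ∀ (z w : C(X, ℂ)) (x : X),
      ‖P z x‖ + ‖(w - P w) x‖ ≤ max ‖P z‖ ‖w - P w‖ := by
    intro z w x
    by_cases ha : P z x = 0
    · rw [ha]
      simp only [norm_zero, zero_add]
      exact (ContinuousMap.norm_coe_le_norm _ x).trans (le_max_right _ _)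
    by_cases hb : (w - P w) x = 0
    · rw [hb]
      simp only [norm_zero, add_zero]
      exact (ContinuousMap.norm_coe_le_norm _ x).trans (le_max_left _ _)
    set a := P z x with ha'
    set b := (w - P w) x with hb'
    set l : ℂ := ((‖b‖ : ℝ) : ℂ) * a / (((‖a‖ : ℝ) : ℂ) * b) with hl'
    have hanorm : (0:ℝ) < ‖a‖ := norm_pos_iff.mpr ha
    have hbnorm : (0:ℝ) < ‖b‖ := norm_pos_iff.mpr hb
    have ha0 : ‖a‖ ≠ 0 := by
      simpa using ne_of_gt hanorm
    have hb0 : ‖b‖ ≠ 0 := by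
      simpa using ne_of_gt hbnorm
    have hl : ‖l‖ = 1 := by
      rw [hl', norm_div, norm_mul, norm_mul, Complex.norm_real, Complex.norm_real,
        Real.norm_of_nonneg (norm_nonneg a), Real.norm_of_nonneg (norm_nonneg b)]
      field_simp
    have hkey := hM z (l • w)
    have hrw : l • w - P (l • w) = l • (w - P w) := by
      rw [map_smul, smul_sub]
    rw [hrw, norm_smul, hl, one_mul] at hkey
    have heval : (P z + l • (w - P w)) x = a + l * b := by
      simp [ContinuousMap.add_apply, ContinuousMap.smul_apply, smul_eq_mul, ha', hb']
    have hval : ‖a + l * b‖ = ‖a‖ + ‖b‖ := by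
      have haC : ((‖a‖ : ℝ) : ℂ) ≠ 0 := by
        exact_mod_cast ha0
      have hbC : ((‖b‖ : ℝ) : ℂ) ≠ 0 := by
        exact_mod_cast hb0
      have hab : a + l * b = a * (((‖a‖ + ‖b‖ : ℝ)) : ℂ) / ((‖a‖ : ℝ) : ℂ) := by
        rw [hl']
        field_simp [hb, haC, hbC]
        push_cast
        ring
      rw [hab, norm_div, norm_mul, Complex.norm_real, Complex.norm_real,
        Real.norm_of_nonneg (by positivity), Real.norm_of_nonneg (norm_nonneg a)]
      field_simp
    calc ‖a‖ + ‖b‖ = ‖(P z + l • (w - P w)) x‖ := by rw [heval, hval]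
      _ ≤ ‖P z + l • (w - P w)‖ := ContinuousMap.norm_coe_le_norm _ x
      _ = max ‖P z‖ ‖w - P w‖ := hkey
  -- the function e = P 1 is pointwise real with values in [0,1]
  have ht : ∀ x : X, P 1 x = (((P 1 x).re : ℝ) : ℂ) ∧ 0 ≤ (P 1 x).re ∧ (P 1 x).re ≤ 1 := by
    intro x
    apply aux_real01
    have := hsum 1 1 x
    rw [hm1] at this
    simpa [ContinuousMap.sub_apply] using this
  set t : X → ℝ := fun x => (P 1 x).re with htdef
  have he_le : ‖P 1‖ ≤ 1 := le_of_max_le_left hm1.le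
  have hf_le : ‖1 - P 1‖ ≤ 1 := le_of_max_le_right hm1.le
  -- values of elements in the range of P are controlled by t
  have hU : ∀ (z : C(X, ℂ)) (x : X), ‖P z x‖ ≤ t x * ‖P z‖ := by
    intro z x
    have hkey := hsum z ((((‖P z‖ : ℝ)) : ℂ) • 1) x
    have hw : (((‖P z‖ : ℝ) : ℂ) • (1 : C(X, ℂ))) - P (((‖P z‖ : ℝ) : ℂ) • 1)
        = ((‖P z‖ : ℝ) : ℂ) • (1 - P 1) := by
      rw [map_smul, smul_sub]
    rw [hw] at hkey
    have h1 : ‖(((‖P z‖ : ℝ) : ℂ) • ((1 : C(X, ℂ)) - P 1))‖ ≤ ‖P z‖ := by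
      rw [norm_smul, Complex.norm_real, Real.norm_of_nonneg (norm_nonneg _)]
      calc ‖P z‖ * ‖(1 : C(X, ℂ)) - P 1‖ ≤ ‖P z‖ * 1 := by
            exact mul_le_mul_of_nonneg_left hf_le (norm_nonneg _)
        _ = ‖P z‖ := mul_one _
    have h2 : ‖(((‖P z‖ : ℝ) : ℂ) • ((1 : C(X, ℂ)) - P 1)) x‖ = ‖P z‖ * (1 - t x) := by
      have h3 : ((1 : C(X, ℂ)) - P 1) x = ((1 - t x : ℝ) : ℂ) := by
        rw [ContinuousMap.sub_apply, ContinuousMap.one_apply, (ht x).1]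
        push_cast
        ring
      rw [ContinuousMap.smul_apply, smul_eq_mul, norm_mul, h3, Complex.norm_real,
        Complex.norm_real, Real.norm_of_nonneg (norm_nonneg _),
        Real.norm_of_nonneg (by linarith [(ht x).2.2] : (0:ℝ) ≤ 1 - t x)]
    rw [h2, max_eq_left h1] at hkey
    nlinarith [hkey]
  have hV : ∀ (w : C(X, ℂ)) (x : X), ‖(w - P w) x‖ ≤ (1 - t x) * ‖w - P w‖ := by
    intro w x
    have hkey := hsum ((((‖w - P w‖ : ℝ)) : ℂ) • 1) w x
    have h1 : ‖P (((‖w - P w‖ : ℝ) : ℂ) • 1)‖ ≤ ‖w - P w‖ := by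
      rw [map_smul, norm_smul, Complex.norm_real, Real.norm_of_nonneg (norm_nonneg _)]
      calc ‖w - P w‖ * ‖P (1 : C(X, ℂ))‖ ≤ ‖w - P w‖ * 1 :=
            mul_le_mul_of_nonneg_left he_le (norm_nonneg _)
        _ = ‖w - P w‖ := mul_one _
    have h2 : ‖(P (((‖w - P w‖ : ℝ) : ℂ) • 1)) x‖ = ‖w - P w‖ * t x := by
      rw [map_smul, ContinuousMap.smul_apply, smul_eq_mul, norm_mul, (ht x).1,
        Complex.norm_real, Complex.norm_real, Real.norm_of_nonneg (norm_nonneg _),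
        Real.norm_of_nonneg (ht x).2.1]
    rw [h2, max_eq_right h1] at hkey
    nlinarith [hkey]
  -- peaking functions
  have hpeak : ∀ (z : C(X, ℂ)) (x : X), ‖z x‖ = ‖z‖ → P z x = ((t x : ℝ) : ℂ) * z x := by
    intro z x hz
    by_cases h0 : ‖z‖ = 0
    · have : z = 0 := norm_eq_zero.mp h0
      subst this
      simp
    have hzx : z x ≠ 0 := by
      intro h
      rw [h, norm_zero] at hz
      exact h0 hz.symm
    have e1 : ‖P z x‖ ≤ t x * ‖z‖ :=
      (hU z x).trans (mul_le_mul_of_nonneg_left (hPnorm z).1 (ht x).2.1)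
    have e2 : ‖(z - P z) x‖ ≤ (1 - t x) * ‖z‖ :=
      (hV z x).trans (mul_le_mul_of_nonneg_left (hPnorm z).2 (by linarith [(ht x).2.2]))
    have esub : (z - P z) x = z x - P z x := by
      rw [ContinuousMap.sub_apply]
    have e3 : ‖z‖ ≤ ‖P z x‖ + ‖(z - P z) x‖ := by
      rw [← hz, esub]
      calc ‖z x‖ = ‖P z x + (z x - P z x)‖ := by ring_nf
        _ ≤ ‖P z x‖ + ‖z x - P z x‖ := norm_add_le _ _
    have q1 : ‖P z x‖ = t x * ‖z‖ := by linarith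
    have q2 : ‖z x - P z x‖ = (1 - t x) * ‖z‖ := by rw [← esub]; linarith
    exact aux_tangent (z x) (P z x) (t x) hzx (by rw [q1, hz]) (by rw [q2, hz])
  -- conclusion
  intro z x
  have htx : P 1 x = ((t x : ℝ) : ℂ) := (ht x).1
  rw [htx]
  -- constants are peaking
  have hconst : ∀ c : ℂ, P (c • 1) x = ((t x : ℝ) : ℂ) * c := by
    intro c
    have hp : ‖(c • (1 : C(X, ℂ))) x‖ = ‖c • (1 : C(X, ℂ))‖ := by
      rw [ContinuousMap.smul_apply, smul_eq_mul, norm_smul, hone, mul_one,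
        ContinuousMap.one_apply, mul_one]
    have := hpeak (c • 1) x hp
    rwa [ContinuousMap.smul_apply, smul_eq_mul, ContinuousMap.one_apply, mul_one] at this
  -- functions vanishing at x
  have hvanish : ∀ w : C(X, ℂ), w x = 0 → P w x = 0 := by
    intro w hw
    have hbound : ∀ ε : ℝ, 0 < ε → ‖P w x‖ ≤ 2 * ε := by
      intro ε hε
      set A : Set X := {y | ε ≤ ‖w y‖} with hA'
      have hA : IsClosed A := isClosed_le continuous_const w.continuous.norm
      have hd : Disjoint ({x} : Set X) A := by
        rw [Set.disjoint_singleton_left]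
        intro hmem
        rw [hA'] at hmem
        simp only [Set.mem_setOf_eq, hw, norm_zero] at hmem
        linarith
      obtain ⟨ψ, hψ0, hψ1, hψ01⟩ :=
        exists_continuous_zero_one_of_isClosed isClosed_singleton hA hd
      set ψ' : C(X, ℂ) := ⟨fun y => ((ψ y : ℝ) : ℂ), Complex.continuous_ofReal.comp ψ.continuous⟩
        with hψ'
      have hψx : ψ x = 0 := hψ0 rfl
      set M : ℝ := ‖w‖ + 1 with hM'
      have hM0 : (0:ℝ) < M := by positivity
      set z2 : C(X, ℂ) := ((M : ℝ) : ℂ) • (1 - ψ') ^ 2 with hz2'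
      set z1 : C(X, ℂ) := w * ψ' + z2 with hz1'
      have hz2x : z2 x = ((M : ℝ) : ℂ) := by
        simp [hz2', hψ', ContinuousMap.smul_apply, ContinuousMap.sub_apply, hψx]
      have hz1x : z1 x = ((M : ℝ) : ℂ) := by
        simp [hz1', hz2x, ContinuousMap.mul_apply, hψ', hw]
      have hznorm : ∀ y : X, ‖z2 y‖ ≤ M ∧ ‖z1 y‖ ≤ M := by
        intro y
        have h01 := hψ01 y
        have hwy : ‖w y‖ ≤ ‖w‖ := ContinuousMap.norm_coe_le_norm w y
        have hz2y : z2 y = ((M * (1 - ψ y) ^ 2 : ℝ) : ℂ) := by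
          simp only [hz2', hψ', ContinuousMap.smul_apply, ContinuousMap.pow_apply,
            ContinuousMap.sub_apply, ContinuousMap.one_apply, ContinuousMap.coe_mk,
            smul_eq_mul]
          push_cast
          ring
        have h2 : ‖z2 y‖ = M * (1 - ψ y) ^ 2 := by
          rw [hz2y, Complex.norm_real, Real.norm_of_nonneg (by nlinarith [h01.1, h01.2])]
        have hsq : (1 - ψ y) ^ 2 ≤ 1 := by nlinarith [h01.1, h01.2]
        constructor
        · rw [h2]
          calc M * (1 - ψ y) ^ 2 ≤ M * 1 := mul_le_mul_of_nonneg_left hsq hM0.le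
            _ = M := mul_one _
        · have : z1 y = w y * ψ' y + z2 y := by
            simp [hz1', ContinuousMap.add_apply, ContinuousMap.mul_apply]
          rw [this]
          calc ‖w y * ψ' y + z2 y‖ ≤ ‖w y * ψ' y‖ + ‖z2 y‖ := norm_add_le _ _
            _ = ‖w y‖ * ψ y + M * (1 - ψ y) ^ 2 := by
                rw [h2, norm_mul]
                congr 1
                rw [hψ']
                simp only [ContinuousMap.coe_mk]
                rw [Complex.norm_real, Real.norm_of_nonneg h01.1]
            _ ≤ M := by
                have h3 : ‖w y‖ * ψ y ≤ M * ψ y :=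
                  mul_le_mul_of_nonneg_right (by linarith) h01.1
                nlinarith [h3, mul_nonneg (mul_nonneg hM0.le h01.1)
                  (sub_nonneg.mpr h01.2)]
      have hz2peak : ‖z2 x‖ = ‖z2‖ := by
        have h1 : ‖z2 x‖ = M := by
          rw [hz2x, Complex.norm_real, Real.norm_of_nonneg hM0.le]
        have h2 : ‖z2‖ ≤ M := by
          rw [ContinuousMap.norm_le _ hM0.le]
          exact fun y => (hznorm y).1
        exact le_antisymm (ContinuousMap.norm_coe_le_norm z2 x) (by rw [h1]; exact h2)
      have hz1peak : ‖z1 x‖ = ‖z1‖ := by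
        have h1 : ‖z1 x‖ = M := by
          rw [hz1x, Complex.norm_real, Real.norm_of_nonneg hM0.le]
        have h2 : ‖z1‖ ≤ M := by
          rw [ContinuousMap.norm_le _ hM0.le]
          exact fun y => (hznorm y).2
        exact le_antisymm (ContinuousMap.norm_coe_le_norm z1 x) (by rw [h1]; exact h2)
      have hp1 := hpeak z1 x hz1peak
      have hp2 := hpeak z2 x hz2peak
      -- hence P (w * ψ') x = t x * (w * ψ') x = 0 at x, but more importantly:
      have hwψ : P (w * ψ') x = ((t x : ℝ) : ℂ) * (w * ψ') x := by
        have hsub : w * ψ' = z1 - z2 := by rw [hz1']; ring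
        rw [hsub, map_sub, ContinuousMap.sub_apply, hp1, hp2, ContinuousMap.sub_apply]
        ring
      -- now estimate P w x = P (w - w ψ') x + P (w ψ') x
      have hsplit : P w x = P (w - w * ψ') x + P (w * ψ') x := by
        rw [← ContinuousMap.add_apply, ← map_add]
        congr 2
        ring
      have hwψx : (w * ψ') x = 0 := by
        simp [ContinuousMap.mul_apply, hw]
      have hrest : ‖w - w * ψ'‖ ≤ ε := by
        rw [ContinuousMap.norm_le _ hε.le]
        intro y
        have h01 := hψ01 y
        have : (w - w * ψ') y = w y * (1 - ((ψ y : ℝ) : ℂ)) := by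
          simp [ContinuousMap.sub_apply, ContinuousMap.mul_apply, hψ']
          ring
        rw [this, norm_mul]
        have hn1 : ‖(1 : ℂ) - ((ψ y : ℝ) : ℂ)‖ = 1 - ψ y := by
          have : (1 : ℂ) - ((ψ y : ℝ) : ℂ) = ((1 - ψ y : ℝ) : ℂ) := by push_cast; ring
          rw [this, Complex.norm_real, Real.norm_of_nonneg (by linarith [h01.2])]
        rw [hn1]
        by_cases hy : y ∈ A
        · have : ψ y = 1 := hψ1 hy
          rw [this]
          simp [hε.le]
        · have : ‖w y‖ < ε := by
            rw [hA'] at hy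
            simpa using not_le.mp hy
          nlinarith [h01.1, h01.2, norm_nonneg (w y)]
      rw [hsplit, hwψ, hwψx, mul_zero, add_zero]
      calc ‖P (w - w * ψ') x‖ ≤ ‖P (w - w * ψ')‖ := ContinuousMap.norm_coe_le_norm _ x
        _ ≤ ‖w - w * ψ'‖ := (hPnorm _).1
        _ ≤ ε := hrest
        _ ≤ 2 * ε := by linarith
    have : ‖P w x‖ ≤ 0 := by
      apply le_of_forall_pos_le_add
      intro ε hε
      calc ‖P w x‖ ≤ 2 * (ε / 2) := hbound (ε / 2) (by linarith)
        _ = 0 + ε := by ring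
    rw [norm_le_zero_iff] at this
    exact this
  -- assemble
  have h1 := hvanish (z - z x • 1) (by simp)
  have h2 := hconst (z x)
  have hsplit : P z x = P (z - z x • 1) x + P (z x • 1) x := by
    rw [← ContinuousMap.add_apply, ← map_add]
    congr 2
    ring
  rw [hsplit, h1, h2, zero_add]

section Plumbing

variable {K L : Type*} [TopologicalSpace K] [TopologicalSpace L]

/-- The linear equivalence between `C(K,ℂ) × C(L,ℂ)` and `C(K ⊕ L, ℂ)`. -/
private noncomputable def sumPairEquiv (K L : Type*) [TopologicalSpace K] [TopologicalSpace L] :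
    (C(K, ℂ) × C(L, ℂ)) ≃ₗ[ℂ] C(K ⊕ L, ℂ) where
  toFun p := ⟨Sum.elim ⇑p.1 ⇑p.2, p.1.continuous.sumElim p.2.continuous⟩
  invFun h := (h.comp ⟨Sum.inl, continuous_inl⟩, h.comp ⟨Sum.inr, continuous_inr⟩)
  map_add' p q := by ext (x | x) <;> rfl
  map_smul' c p := by ext (x | x) <;> rfl
  left_inv p := by
    refine Prod.ext ?_ ?_ <;> ext x <;> rfl
  right_inv h := by ext (x | x) <;> rfl

private lemma sumPairEquiv_apply_inl (p : C(K, ℂ) × C(L, ℂ)) (k : K) :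
    sumPairEquiv K L p (Sum.inl k) = p.1 k := rfl

private lemma sumPairEquiv_apply_inr (p : C(K, ℂ) × C(L, ℂ)) (l : L) :
    sumPairEquiv K L p (Sum.inr l) = p.2 l := rfl

private lemma sumPairEquiv_norm [CompactSpace K] [CompactSpace L]
    (p : C(K, ℂ) × C(L, ℂ)) : ‖sumPairEquiv K L p‖ = ‖p‖ := by
  haveI : CompactSpace (K ⊕ L) := by infer_instance
  apply le_antisymm
  · rw [ContinuousMap.norm_le _ (norm_nonneg p)]
    rintro (k | l)
    · rw [sumPairEquiv_apply_inl]
      exact (ContinuousMap.norm_coe_le_norm p.1 k).trans (le_max_left _ _)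
    · rw [sumPairEquiv_apply_inr]
      exact (ContinuousMap.norm_coe_le_norm p.2 l).trans (le_max_right _ _)
  · rw [Prod.norm_def]
    apply max_le
    · rw [ContinuousMap.norm_le _ (norm_nonneg _)]
      intro k
      rw [← sumPairEquiv_apply_inl]
      exact ContinuousMap.norm_coe_le_norm _ _
    · rw [ContinuousMap.norm_le _ (norm_nonneg _)]
      intro l
      rw [← sumPairEquiv_apply_inr]
      exact ContinuousMap.norm_coe_le_norm _ _

end Plumbing

private lemma zero_one_const {Z : Type*} [TopologicalSpace Z] [ConnectedSpace Z] (g : C(Z, ℂ))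
    (hg : ∀ z, g z = 0 ∨ g z = 1) : (∀ z, g z = 0) ∨ (∀ z, g z = 1) := by
  set s : Set Z := {z | g z = 0} with hs
  have hsc : IsClosed s := isClosed_eq g.continuous continuous_const
  have hso : IsOpen s := by
    have hcompl : sᶜ = {z | g z = 1} := by
      ext z
      rcases hg z with h | h <;> simp [hs, h]
    have hc : IsClosed sᶜ := by
      rw [hcompl]
      exact isClosed_eq g.continuous continuous_const
    simpa using hc.isOpen_compl
  rcases isClopen_iff.mp ⟨hsc, hso⟩ with h | h
  · right
    intro z
    rcases hg z with h0 | h1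
    · exact absurd (show z ∈ s from h0) (by rw [h]; exact Set.notMem_empty z)
    · exact h1
  · left
    intro z
    have : z ∈ s := by rw [h]; trivial
    exact this

set_option maxHeartbeats 2000000 in
/-- A surjective linear isometry of `C(K,ℂ) ⊕ C(L,ℂ)` (sup norm), with `K`, `L`
nonempty compact Hausdorff connected spaces, either preserves the summand
`C(K,ℂ) ⊕ {0}` or maps it onto `{0} ⊕ C(L,ℂ)`. -/
theorem isometry_of_sum_CK_CL_preserves_or_swaps
    {K L : Type*} [TopologicalSpace K] [CompactSpace K] [T2Space K] [ConnectedSpace K]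
    [TopologicalSpace L] [CompactSpace L] [T2Space L] [ConnectedSpace L]
    (α : (C(K, ℂ) × C(L, ℂ)) →ₗᵢ[ℂ] (C(K, ℂ) × C(L, ℂ)))
    (hα : Function.Surjective α) :
    ⇑α '' {p : C(K, ℂ) × C(L, ℂ) | p.2 = 0} = {p : C(K, ℂ) × C(L, ℂ) | p.2 = 0} ∨
    ⇑α '' {p : C(K, ℂ) × C(L, ℂ) | p.2 = 0} = {p : C(K, ℂ) × C(L, ℂ) | p.1 = 0} := by
  classical
  haveI : Nonempty K := inferInstance
  haveI : Nonempty L := inferInstance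
  haveI : Nonempty (K ⊕ L) := ⟨Sum.inl (Classical.arbitrary K)⟩
  set β := LinearIsometryEquiv.ofSurjective α hα with hβ
  have hβα : ∀ p, β p = α p := fun p =>
    congrFun (LinearIsometryEquiv.coe_ofSurjective α hα) p
  set E := sumPairEquiv K L with hE
  -- the projection onto the first summand
  set π : (C(K, ℂ) × C(L, ℂ)) →ₗ[ℂ] (C(K, ℂ) × C(L, ℂ)) :=
    (LinearMap.inl ℂ _ _).comp (LinearMap.fst ℂ _ _) with hπ
  have hπ_apply : ∀ p : C(K, ℂ) × C(L, ℂ), π p = (p.1, 0) := fun p => rfl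
  -- the conjugated projection on C(K ⊕ L, ℂ)
  set P : C(K ⊕ L, ℂ) →ₗ[ℂ] C(K ⊕ L, ℂ) :=
    (E.toLinearMap.comp ((β.toLinearEquiv.toLinearMap.comp π).comp
      (β.symm.toLinearEquiv.toLinearMap.comp E.symm.toLinearMap))) with hP
  have hP_apply : ∀ z, P z = E (β (π (β.symm (E.symm z)))) := fun z => rfl
  have hPE : ∀ a : C(K, ℂ) × C(L, ℂ), P (E a) = E (β (π (β.symm a))) := by
    intro a
    rw [hP_apply, LinearEquiv.symm_apply_apply]
  have hEnorm : ∀ p : C(K, ℂ) × C(L, ℂ), ‖E p‖ = ‖p‖ := by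
    intro p
    rw [hE]
    exact sumPairEquiv_norm p
  -- the M-decomposition property
  have hM : ∀ z w : C(K ⊕ L, ℂ), ‖P z + (w - P w)‖ = max ‖P z‖ ‖w - P w‖ := by
    intro z w
    set a := β.symm (E.symm z) with ha
    set b := β.symm (E.symm w) with hb
    have h1 : P z = E (β (a.1, 0)) := by rw [hP_apply, ← ha, hπ_apply]
    have h2 : w - P w = E (β (0, b.2)) := by
      have hPw : P w = E (β (π b)) := by rw [hP_apply, ← hb]
      have hw : w = E (β b) := by
        rw [hb, LinearIsometryEquiv.apply_symm_apply, LinearEquiv.apply_symm_apply]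
      calc w - P w = E (β b) - E (β (b.1, 0)) := by rw [hPw, hw, hπ_apply]
        _ = E (β b - β (b.1, 0)) := (map_sub E _ _).symm
        _ = E (β (b - (b.1, 0))) := by rw [map_sub β]
        _ = E (β (0, b.2)) := by
            congr 1
            congr 1
            exact Prod.ext (by simp) (by simp)
    have h3 : P z + (w - P w) = E (β (a.1, b.2)) := by
      calc P z + (w - P w) = E (β (a.1, 0)) + E (β (0, b.2)) := by rw [h1, h2]
        _ = E (β (a.1, 0) + β (0, b.2)) := (map_add E _ _).symm
        _ = E (β ((a.1, 0) + (0, b.2))) := by rw [map_add β]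
        _ = E (β (a.1, b.2)) := by
            congr 1
            congr 1
            exact Prod.ext (by simp) (by simp)
    rw [h3, h1, h2, hEnorm, hEnorm, hEnorm,
      LinearIsometryEquiv.norm_map, LinearIsometryEquiv.norm_map,
      LinearIsometryEquiv.norm_map, Prod.norm_def, Prod.norm_def, Prod.norm_def]
    simp only [norm_zero]
    rw [max_eq_left (norm_nonneg _), max_eq_right (norm_nonneg _)]
  -- apply the key lemma
  have hkey := keyA P hM
  set e : C(K ⊕ L, ℂ) := P 1 with he
  -- idempotency of P gives that e takes values in {0, 1}
  have hππ : ∀ p : C(K, ℂ) × C(L, ℂ), π (π p) = π p := by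
    intro p
    simp [hπ_apply]
  have hPP : P e = e := by
    have h1e : P (1 : C(K ⊕ L, ℂ)) = E (β (π (β.symm (E.symm 1)))) := hP_apply 1
    rw [he, h1e, hPE, LinearIsometryEquiv.symm_apply_apply, hππ]
  have he01 : ∀ x, e x = 0 ∨ e x = 1 := by
    intro x
    have h1 : P e x = e x * e x := by rw [hkey e x]
    rw [hPP] at h1
    have : e x * (e x - 1) = 0 := by linear_combination -h1
    rcases mul_eq_zero.mp this with h | h
    · exact Or.inl h
    · exact Or.inr (by linear_combination h)
  -- e is constant on each of K and L
  have heK : (∀ k : K, e (Sum.inl k) = 0) ∨ (∀ k : K, e (Sum.inl k) = 1) :=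
    zero_one_const (e.comp ⟨Sum.inl, continuous_inl⟩) (fun k => he01 (Sum.inl k))
  have heL : (∀ l : L, e (Sum.inr l) = 0) ∨ (∀ l : L, e (Sum.inr l) = 1) :=
    zero_one_const (e.comp ⟨Sum.inr, continuous_inr⟩) (fun l => he01 (Sum.inr l))
  -- the master identity, componentwise
  have hmain : ∀ a : C(K, ℂ) × C(L, ℂ),
      (∀ k, (β (π (β.symm a))).1 k = e (Sum.inl k) * a.1 k) ∧
      (∀ l, (β (π (β.symm a))).2 l = e (Sum.inr l) * a.2 l) := by
    intro a
    have h1 : P (E a) = E (β (π (β.symm a))) := hPE a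
    constructor
    · intro k
      have h2 := hkey (E a) (Sum.inl k)
      rw [h1] at h2
      have h3 : E (β (π (β.symm a))) (Sum.inl k) = (β (π (β.symm a))).1 k := by
        rw [hE]; exact sumPairEquiv_apply_inl _ _
      have h4 : E a (Sum.inl k) = a.1 k := by
        rw [hE]; exact sumPairEquiv_apply_inl _ _
      rw [h3, h4] at h2
      exact h2
    · intro l
      have h2 := hkey (E a) (Sum.inr l)
      rw [h1] at h2
      have h3 : E (β (π (β.symm a))) (Sum.inr l) = (β (π (β.symm a))).2 l := by
        rw [hE]; exact sumPairEquiv_apply_inr _ _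
      have h4 : E a (Sum.inr l) = a.2 l := by
        rw [hE]; exact sumPairEquiv_apply_inr _ _
      rw [h3, h4] at h2
      exact h2
  rcases heK with hK0 | hK1 <;> rcases heL with hL0 | hL1
  · -- e ≡ 0 : impossible
    exfalso
    have h := hmain (β ((1 : C(K, ℂ)), (0 : C(L, ℂ))))
    rw [LinearIsometryEquiv.symm_apply_apply, hπ_apply] at h
    have hz : β ((1 : C(K, ℂ)), (0 : C(L, ℂ))) = 0 := by
      refine Prod.ext (ContinuousMap.ext fun k => ?_) (ContinuousMap.ext fun l => ?_)
      · have := h.1 k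
        rw [hK0 k, zero_mul] at this
        simpa using this
      · have := h.2 l
        rw [hL0 l, zero_mul] at this
        simpa using this
    have h10 : ((1 : C(K, ℂ)), (0 : C(L, ℂ))) = 0 := by
      exact β.injective (by rw [hz, map_zero] : _ = β 0)
    have h1K : (1 : C(K, ℂ)) = 0 := congrArg Prod.fst h10
    have := congrFun (congrArg DFunLike.coe h1K) (Classical.arbitrary K)
    simpa using this
  · -- e ≡ 0 on K, ≡ 1 on L : α swaps the summands
    right
    have hid : ∀ a : C(K, ℂ) × C(L, ℂ), β (π (β.symm a)) = (0, a.2) := by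
      intro a
      have h := hmain a
      refine Prod.ext (ContinuousMap.ext fun k => ?_) (ContinuousMap.ext fun l => ?_)
      · rw [h.1 k, hK0 k, zero_mul]; rfl
      · rw [h.2 l, hL1 l, one_mul]
    apply Set.eq_of_subset_of_subset
    · rintro q ⟨p, hp, rfl⟩
      have hp2 : p.2 = 0 := hp
      have hπp : π p = p := by
        rw [hπ_apply]
        exact Prod.ext rfl hp2.symm
      have h := hid (β p)
      rw [LinearIsometryEquiv.symm_apply_apply, hπp] at h
      show (α p).1 = 0
      rw [← hβα p, h]
    · intro q hq
      have hq1 : q.1 = 0 := hq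
      refine ⟨π (β.symm q), ?_, ?_⟩
      · show (π (β.symm q)).2 = 0
        rw [hπ_apply]
      · rw [← hβα, hid q]
        exact Prod.ext hq1.symm rfl
  · -- e ≡ 1 on K, ≡ 0 on L : α preserves the first summand
    left
    have hid : ∀ a : C(K, ℂ) × C(L, ℂ), β (π (β.symm a)) = (a.1, 0) := by
      intro a
      have h := hmain a
      refine Prod.ext (ContinuousMap.ext fun k => ?_) (ContinuousMap.ext fun l => ?_)
      · rw [h.1 k, hK1 k, one_mul]
      · rw [h.2 l, hL0 l, zero_mul]; rfl
    apply Set.eq_of_subset_of_subset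
    · rintro q ⟨p, hp, rfl⟩
      have hp2 : p.2 = 0 := hp
      have hπp : π p = p := by
        rw [hπ_apply]
        exact Prod.ext rfl hp2.symm
      have h := hid (β p)
      rw [LinearIsometryEquiv.symm_apply_apply, hπp] at h
      show (α p).2 = 0
      rw [← hβα p, h]
    · intro q hq
      have hq2 : q.2 = 0 := hq
      refine ⟨π (β.symm q), ?_, ?_⟩
      · show (π (β.symm q)).2 = 0
        rw [hπ_apply]
      · rw [← hβα, hid q]
        exact Prod.ext rfl hq2.symm
  · -- e ≡ 1 : impossible
    exfalso
    have h := hmain (β ((0 : C(K, ℂ)), (1 : C(L, ℂ))))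
    rw [LinearIsometryEquiv.symm_apply_apply, hπ_apply] at h
    have hπ0 : ((((0 : C(K, ℂ)), (1 : C(L, ℂ))) : C(K, ℂ) × C(L, ℂ)).1, (0 : C(L, ℂ)))
        = (0 : C(K, ℂ) × C(L, ℂ)) := Prod.ext rfl rfl
    rw [hπ0, map_zero] at h
    have hz : β ((0 : C(K, ℂ)), (1 : C(L, ℂ))) = 0 := by
      refine Prod.ext (ContinuousMap.ext fun k => ?_) (ContinuousMap.ext fun l => ?_)
      · have := h.1 k
        rw [hK1 k, one_mul] at this
        simpa using this.symm
      · have := h.2 l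
        rw [hL1 l, one_mul] at this
        simpa using this.symm
    have h10 : ((0 : C(K, ℂ)), (1 : C(L, ℂ))) = 0 := by
      exact β.injective (by rw [hz, map_zero] : _ = β 0)
    have h1L : (1 : C(L, ℂ)) = 0 := congrArg Prod.snd h10
    have := congrFun (congrArg DFunLike.coe h1L) (Classical.arbitrary L)
    simpa using this
end

section
/- Let L and K be compact metric spaces and ζ : L → K a continuous surjection. Equip the spaces of nonempty closed (equivalently, compact) subsets of K and of L with the Hausdorff metric. Then the map A ↦ ζ^{-1}(A), from nonempty closed subsets of K to nonempty closed subsets of L, is Borel measurable. -/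
open TopologicalSpace

open Metric EMetric Set in
/-- The set of nonempty compact sets hitting a fixed closed set is closed in the
Hausdorff metric. -/
theorem isClosed_hit_closed {X : Type*} [MetricSpace X] {C : Set X} (hC : IsClosed C) :
    IsClosed {A : NonemptyCompacts X | ((A : Set X) ∩ C).Nonempty} := by
  rw [← isOpen_compl_iff, Metric.isOpen_iff]
  intro A hA
  have hsub : (A : Set X) ⊆ Cᶜ := by
    intro x hx hxC
    exact hA ⟨x, hx, hxC⟩
  obtain ⟨δ, δpos, hδ⟩ := A.isCompact.exists_thickening_subset_open hC.isOpen_compl hsub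
  refine ⟨δ, δpos, fun B hB => ?_⟩
  rintro ⟨x, hxB, hxC⟩
  have hne : hausdorffEdist (B : Set X) (A : Set X) ≠ ⊤ :=
    hausdorffEdist_ne_top_of_nonempty_of_bounded B.nonempty A.nonempty
      B.isCompact.isBounded A.isCompact.isBounded
  have h1 : infDist x (A : Set X) ≤ hausdorffDist (B : Set X) (A : Set X) :=
    infDist_le_hausdorffDist_of_mem hxB hne
  have h2 : hausdorffDist (B : Set X) (A : Set X) < δ := by
    rw [← Metric.NonemptyCompacts.dist_eq]
    exact hB
  have : x ∈ thickening δ (A : Set X) :=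
    (mem_thickening_iff_infDist_lt A.nonempty).2 (h1.trans_lt h2)
  exact hδ this hxC

open Metric EMetric Set in
/-- Every open set in a metric space is a countable union of closed subsets of it. -/
theorem isOpen_eq_iUnion_closed {X : Type*} [MetricSpace X] {U : Set X} (hU : IsOpen U) :
    ∃ C : ℕ → Set X, (∀ n, IsClosed (C n)) ∧ (∀ n, C n ⊆ U) ∧ U = ⋃ n, C n := by
  refine ⟨fun n => {x | ((n : ENNReal))⁻¹ ≤ infEdist x Uᶜ}, fun n => ?_, fun n x hx => ?_, ?_⟩
  · exact isClosed_le continuous_const continuous_infEdist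
  · by_contra hxU
    have h0 : infEdist x Uᶜ = 0 := infEdist_zero_of_mem hxU
    rw [Set.mem_setOf_eq, h0, nonpos_iff_eq_zero, ENNReal.inv_eq_zero] at hx
    exact (ENNReal.natCast_ne_top n) hx
  · ext x
    simp only [Set.mem_iUnion, Set.mem_setOf_eq]
    constructor
    · intro hx
      have hxc : x ∉ closure Uᶜ := by
        rw [hU.isClosed_compl.closure_eq]
        exact fun h => h hx
      have hpos : infEdist x Uᶜ ≠ 0 := by
        intro h0
        exact hxc (EMetric.mem_closure_iff_infEdist_zero.2 h0)
      obtain ⟨n, hn⟩ := ENNReal.exists_inv_nat_lt hpos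
      exact ⟨n, hn.le⟩
    · rintro ⟨n, hn⟩
      by_contra hxU
      have h0 : infEdist x Uᶜ = 0 := infEdist_zero_of_mem hxU
      rw [h0, nonpos_iff_eq_zero, ENNReal.inv_eq_zero] at hn
      exact (ENNReal.natCast_ne_top n) hn

open Metric EMetric Set in
/-- In a separable metric space, every open set is a countable union of closed balls. -/
theorem isOpen_eq_countable_union_closedBall {X : Type*} [MetricSpace X] [SeparableSpace X]
    {V : Set X} (hV : IsOpen V) :
    ∃ T : Set (X × ℝ), T.Countable ∧ V = ⋃ p ∈ T, Metric.closedBall p.1 p.2 := by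
  obtain ⟨s, hsc, hsd⟩ := TopologicalSpace.exists_countable_dense X
  refine ⟨(s ×ˢ (Set.range fun n : ℕ => (1 : ℝ) / (n + 1))) ∩
      {p | Metric.closedBall p.1 p.2 ⊆ V},
    ((hsc.prod (Set.countable_range _)).mono Set.inter_subset_left), ?_⟩
  apply Set.Subset.antisymm
  · intro x hx
    obtain ⟨ε, εpos, hball⟩ := Metric.isOpen_iff.1 hV x hx
    obtain ⟨n, hn⟩ := exists_nat_one_div_lt (half_pos εpos)
    have hrad : (0 : ℝ) < 1 / (n + 1) := by positivity
    obtain ⟨y, hyb, hys⟩ := (Metric.dense_iff.1 hsd) x _ hrad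
    refine Set.mem_iUnion₂.2 ⟨(y, (1 : ℝ) / (n + 1)), ⟨⟨hys, ⟨n, rfl⟩⟩, ?_⟩, ?_⟩
    · intro z hz
      apply hball
      have h1 : dist z x ≤ dist z y + dist y x := dist_triangle z y x
      have h2 : dist z y ≤ 1 / (n + 1) := hz
      have h3 : dist y x < 1 / (n + 1) := Metric.mem_ball.1 hyb
      have : dist z x < ε := by
        calc dist z x ≤ dist z y + dist y x := h1
          _ < 1 / (n + 1) + 1 / (n + 1) := by linarith
          _ < ε / 2 + ε / 2 := by linarith
          _ = ε := by ring
      exact this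
    · exact Metric.mem_closedBall.2 (by rw [dist_comm]; exact (Metric.mem_ball.1 hyb).le)
  · intro x hx
    obtain ⟨p, hp, hxp⟩ := Set.mem_iUnion₂.1 hx
    exact hp.2 hxp

open Metric EMetric Set in
/-- Membership in a closed Hausdorff-metric ball, characterized through hitting sets. -/
theorem mem_closedBall_iff_hit {X : Type*} [MetricSpace X] (B₀ : NonemptyCompacts X) {r : ℝ}
    (hr : 0 ≤ r) {c : Set X} (hc : c ⊆ (B₀ : Set X)) (hcd : (B₀ : Set X) ⊆ closure c)
    (B : NonemptyCompacts X) :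
    B ∈ Metric.closedBall B₀ r ↔
      ¬((B : Set X) ∩ {x | r < infDist x (B₀ : Set X)}).Nonempty ∧
        ∀ x ∈ c, ∀ n : ℕ, ((B : Set X) ∩ Metric.ball x (r + 1 / (n + 1))).Nonempty := by
  have hne : hausdorffEdist (B : Set X) (B₀ : Set X) ≠ ⊤ :=
    hausdorffEdist_ne_top_of_nonempty_of_bounded B.nonempty B₀.nonempty
      B.isCompact.isBounded B₀.isCompact.isBounded
  rw [Metric.mem_closedBall, Metric.NonemptyCompacts.dist_eq]
  constructor
  · intro h
    constructor
    · rintro ⟨x, hxB, hxW⟩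
      have : infDist x (B₀ : Set X) ≤ r :=
        (infDist_le_hausdorffDist_of_mem hxB hne).trans h
      exact absurd this (not_le.2 hxW)
    · intro x hx n
      have hxB₀ : x ∈ (B₀ : Set X) := hc hx
      have h' : hausdorffDist (B₀ : Set X) (B : Set X) ≤ r := by
        rwa [hausdorffDist_comm]
      have hne' : hausdorffEdist (B₀ : Set X) (B : Set X) ≠ ⊤ := by
        exact hausdorffEdist_ne_top_of_nonempty_of_bounded B₀.nonempty B.nonempty
          B₀.isCompact.isBounded B.isCompact.isBounded
      have h1 : infDist x (B : Set X) ≤ r :=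
        (infDist_le_hausdorffDist_of_mem hxB₀ hne').trans h'
      have h2 : infDist x (B : Set X) < r + 1 / (n + 1) := by
        have : (0 : ℝ) < 1 / (n + 1) := by positivity
        linarith
      obtain ⟨y, hyB, hy⟩ := (infDist_lt_iff B.nonempty).1 h2
      exact ⟨y, hyB, Metric.mem_ball.2 (by rw [dist_comm]; exact hy)⟩
  · rintro ⟨h1, h2⟩
    apply hausdorffDist_le_of_infDist hr
    · intro x hx
      by_contra hlt
      exact h1 ⟨x, hx, not_le.1 hlt⟩
    · intro x hx
      have hS : IsClosed {y : X | infDist y (B : Set X) ≤ r} :=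
        isClosed_le (continuous_infDist_pt _) continuous_const
      have hcS : c ⊆ {y : X | infDist y (B : Set X) ≤ r} := by
        intro y hy
        by_contra hno
        rw [Set.mem_setOf_eq, not_le] at hno
        obtain ⟨n, hn⟩ := exists_nat_one_div_lt (sub_pos.2 hno)
        obtain ⟨z, hzB, hz⟩ := h2 y hy n
        have : infDist y (B : Set X) ≤ dist y z := infDist_le_dist_of_mem hzB
        have hz' : dist z y < r + 1 / (n + 1) := hz
        rw [dist_comm] at hz'
        linarith
      exact hS.closure_subset_iff.2 hcS (hcd hx)

open Metric EMetric Set in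
/-- For a continuous surjection `ζ : L → K` between compact metric spaces, the
preimage map `A ↦ ζ⁻¹(A)` between the hyperspaces of nonempty compact subsets
(with the Hausdorff metric, hence their Borel σ-algebras) is Borel measurable. -/
theorem measurable_preimage_map_nonemptyCompacts
    {L K : Type*} [MetricSpace L] [MetricSpace K] [CompactSpace L] [CompactSpace K]
    (ζ : L → K) (hζc : Continuous ζ) (hζs : Function.Surjective ζ)
    (f : NonemptyCompacts K → NonemptyCompacts L)
    (hf : ∀ A : NonemptyCompacts K, (f A : Set L) = ζ ⁻¹' (A : Set K)) :
    @Measurable _ _ (borel (NonemptyCompacts K)) (borel (NonemptyCompacts L)) f := by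
  letI : MeasurableSpace (NonemptyCompacts K) := borel (NonemptyCompacts K)
  haveI : BorelSpace (NonemptyCompacts K) := ⟨rfl⟩
  letI : MeasurableSpace (NonemptyCompacts L) := borel (NonemptyCompacts L)
  haveI : BorelSpace (NonemptyCompacts L) := ⟨rfl⟩
  -- Step 1: the preimage of each "hitting an open set" set is measurable.
  have key : ∀ U : Set L, IsOpen U →
      MeasurableSet (f ⁻¹' {B : NonemptyCompacts L | ((B : Set L) ∩ U).Nonempty}) := by
    intro U hU
    obtain ⟨C, hCcl, hCsub, hCU⟩ := isOpen_eq_iUnion_closed hU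
    have heq : f ⁻¹' {B : NonemptyCompacts L | ((B : Set L) ∩ U).Nonempty} =
        ⋃ n, {A : NonemptyCompacts K | ((A : Set K) ∩ ζ '' C n).Nonempty} := by
      ext A
      simp only [Set.mem_preimage, Set.mem_setOf_eq, hf, Set.mem_iUnion]
      constructor
      · rintro ⟨x, hxA, hxU⟩
        rw [hCU] at hxU
        obtain ⟨n, hn⟩ := Set.mem_iUnion.1 hxU
        exact ⟨n, ζ x, hxA, x, hn, rfl⟩
      · rintro ⟨n, y, hyA, x, hxC, rfl⟩
        exact ⟨x, hyA, hCU ▸ Set.mem_iUnion.2 ⟨n, hxC⟩⟩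
    rw [heq]
    exact MeasurableSet.iUnion fun n =>
      (isClosed_hit_closed (((hCcl n).isCompact.image hζc).isClosed)).measurableSet
  -- Step 2: the preimage of each closed ball is measurable.
  have keyCB : ∀ (B₀ : NonemptyCompacts L) (r : ℝ),
      MeasurableSet (f ⁻¹' Metric.closedBall B₀ r) := by
    intro B₀ r
    rcases lt_or_ge r 0 with hr | hr
    · rw [Metric.closedBall_eq_empty.2 hr]
      simp
    obtain ⟨c, hcsub, hccount, hcdense⟩ :=
      EMetric.subset_countable_closure_of_compact B₀.isCompact
    have W_open : IsOpen {x : L | r < infDist x (B₀ : Set L)} :=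
      isOpen_lt continuous_const (continuous_infDist_pt _)
    have heq : f ⁻¹' Metric.closedBall B₀ r =
        (f ⁻¹' {B : NonemptyCompacts L |
            ((B : Set L) ∩ {x | r < infDist x (B₀ : Set L)}).Nonempty})ᶜ ∩
          ⋂ x ∈ c, ⋂ n : ℕ, f ⁻¹' {B : NonemptyCompacts L |
            ((B : Set L) ∩ Metric.ball x (r + 1 / (n + 1))).Nonempty} := by
      ext A
      simp only [Set.mem_preimage, Set.mem_inter_iff, Set.mem_compl_iff, Set.mem_iInter,
        Set.mem_setOf_eq]
      exact mem_closedBall_iff_hit B₀ hr hcsub hcdense (f A)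
    rw [heq]
    exact ((key _ W_open).compl).inter
      (MeasurableSet.biInter hccount fun x _ =>
        MeasurableSet.iInter fun n => key _ Metric.isOpen_ball)
  -- Step 3: conclude, using that open sets are countable unions of closed balls.
  refine measurable_of_isOpen fun V hV => ?_
  obtain ⟨T, hTc, hTeq⟩ := isOpen_eq_countable_union_closedBall hV
  rw [hTeq, Set.preimage_iUnion₂]
  exact MeasurableSet.biUnion hTc fun p _ => keyCB p.1 p.2
end
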